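/- For the Guillot vector field v = (x² + y⁴, xy, 2y²z - xz) and the multiplier M = 1/(2zy³), the scaled field Mv is divergence-free on the region where y ≠ 0 and z ≠ 0: ∇ · (Mv) = 0. -/

import Mathlib

noncomputable section

/-- Points/vectors in ℝ³. -/
abbrev V3 := ℝ × ℝ × ℝ

/-- Partial derivative in the first coordinate. -/
def pd1 (f : V3 → ℝ) (p : V3) : ℝ := deriv (fun t => f (t, p.2.1, p.2.2)) p.1
/-- Partial derivative in the second coordinate. -/
def pd2 (f : V3 → ℝ) (p : V3) : ℝ := deriv (fun t => f (p.1, t, p.2.2)) p.2.1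
/-- Partial derivative in the third coordinate. -/
def pd3 (f : V3 → ℝ) (p : V3) : ℝ := deriv (fun t => f (p.1, p.2.1, t)) p.2.2

/-- Gradient of a scalar function on ℝ³. -/
def grad (f : V3 → ℝ) (p : V3) : V3 := (pd1 f p, pd2 f p, pd3 f p)

/-- Euclidean dot product on ℝ³. -/
def dot (a b : V3) : ℝ := a.1 * b.1 + a.2.1 * b.2.1 + a.2.2 * b.2.2

/-- Cross product on ℝ³. -/
def cross (a b : V3) : V3 :=
  (a.2.1 * b.2.2 - a.2.2 * b.2.1,
   a.2.2 * b.1 - a.1 * b.2.2,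
   a.1 * b.2.1 - a.2.1 * b.1)

/-- Curl of a vector field on ℝ³. -/
def curl (F : V3 → V3) (p : V3) : V3 :=
  (pd2 (fun q => (F q).2.2) p - pd3 (fun q => (F q).2.1) p,
   pd3 (fun q => (F q).1) p - pd1 (fun q => (F q).2.2) p,
   pd1 (fun q => (F q).2.1) p - pd2 (fun q => (F q).1) p)

/-- Divergence of a vector field on ℝ³. -/
def diverg (F : V3 → V3) (p : V3) : ℝ :=
  pd1 (fun q => (F q).1) p + pd2 (fun q => (F q).2.1) p + pd3 (fun q => (F q).2.2) p

/-- Jacobi–Lie bracket of vector fields on ℝ³ (componentwise `(X·∇)Y - (Y·∇)X`). -/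
def lie (X Y : V3 → V3) (p : V3) : V3 :=
  (dot (X p) (grad (fun q => (Y q).1) p) - dot (Y p) (grad (fun q => (X q).1) p),
   dot (X p) (grad (fun q => (Y q).2.1) p) - dot (Y p) (grad (fun q => (X q).2.1) p),
   dot (X p) (grad (fun q => (Y q).2.2) p) - dot (Y p) (grad (fun q => (X q).2.2) p))

/-- The Guillot vector field. -/
def vG (p : V3) : V3 :=
  (p.1 ^ 2 + p.2.1 ^ 4, p.1 * p.2.1, 2 * p.2.1 ^ 2 * p.2.2 - p.1 * p.2.2)

/-- M = 1/(2zy³) is a Jacobi last multiplier for the Guillot system: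
∇·(Mv) = 0 where y ≠ 0 and z ≠ 0. -/
theorem stmt12 :
    ∀ p : V3, p.2.1 ≠ 0 → p.2.2 ≠ 0 →
      diverg (fun q : V3 => (1 / (2 * q.2.2 * q.2.1 ^ 3)) • vG q) p = 0 := by
  intro p hy hz
  obtain ⟨x, y, z⟩ := p
  simp only at hy hz
  have hy3 : y ^ 3 ≠ 0 := pow_ne_zero _ hy
  have hden : (2 : ℝ) * z * y ^ 3 ≠ 0 := by
    exact mul_ne_zero (mul_ne_zero two_ne_zero hz) hy3
  unfold diverg pd1 pd2 pd3 vG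
  simp only [Prod.smul_fst, Prod.smul_snd, smul_eq_mul]
  have h1 : deriv (fun t : ℝ => 1 / (2 * z * y ^ 3) * (t ^ 2 + y ^ 4)) x
      = 1 / (2 * z * y ^ 3) * (2 * x) := by
    have : HasDerivAt (fun t : ℝ => 1 / (2 * z * y ^ 3) * (t ^ 2 + y ^ 4))
        (1 / (2 * z * y ^ 3) * (2 * x)) x := by
      have := ((hasDerivAt_pow 2 x).add_const (y ^ 4)).const_mul (1 / (2 * z * y ^ 3))
      simpa using this
    exact this.deriv
  have h2 : deriv (fun t : ℝ => 1 / (2 * z * t ^ 3) * (x * t)) y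
      = (x * (2 * z * y ^ 3) - x * y * (2 * z * (3 * y ^ 2))) / (2 * z * y ^ 3) ^ 2 := by
    have hn : HasDerivAt (fun t : ℝ => x * t) x y := by
      simpa using (hasDerivAt_id y).const_mul x
    have hd : HasDerivAt (fun t : ℝ => 2 * z * t ^ 3) (2 * z * (3 * y ^ 2)) y := by
      simpa using (hasDerivAt_pow 3 y).const_mul (2 * z)
    have := hn.div hd hden
    have h' : HasDerivAt (fun t : ℝ => 1 / (2 * z * t ^ 3) * (x * t))
        ((x * (2 * z * y ^ 3) - x * y * (2 * z * (3 * y ^ 2))) / (2 * z * y ^ 3) ^ 2) y := by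
      refine this.congr_of_eventuallyEq (Filter.Eventually.of_forall fun t => ?_)
      simp only [Pi.div_apply]
      ring
    exact h'.deriv
  have h3 : deriv (fun t : ℝ => 1 / (2 * t * y ^ 3) * (2 * y ^ 2 * t - x * t)) z
      = ((2 * y ^ 2 - x) * (2 * z * y ^ 3) - (2 * y ^ 2 * z - x * z) * (2 * y ^ 3))
          / (2 * z * y ^ 3) ^ 2 := by
    have hn : HasDerivAt (fun t : ℝ => 2 * y ^ 2 * t - x * t) (2 * y ^ 2 - x) z := by
      exact (((hasDerivAt_id z).const_mul (2 * y ^ 2)).sub ((hasDerivAt_id z).const_mul x)).congr_deriv (by ring)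
    have hd : HasDerivAt (fun t : ℝ => 2 * t * y ^ 3) (2 * y ^ 3) z := by
      simpa using ((hasDerivAt_id z).const_mul 2).mul_const (y ^ 3)
    have := hn.div hd hden
    have h' : HasDerivAt (fun t : ℝ => 1 / (2 * t * y ^ 3) * (2 * y ^ 2 * t - x * t))
        (((2 * y ^ 2 - x) * (2 * z * y ^ 3) - (2 * y ^ 2 * z - x * z) * (2 * y ^ 3))
          / (2 * z * y ^ 3) ^ 2) z := by
      refine this.congr_of_eventuallyEq (Filter.Eventually.of_forall fun t => ?_)
      simp only [Pi.div_apply]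
      ring
    exact h'.deriv
  simp only [h1, h2, h3]
  field_simp
  ring
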